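/- Let Σ² be a non-minimal, non-pseudo-umbilical pmc helix surface in M⁴(c)×ℝ with 0 < |T| < 1, c ≠ 0, and suppose H is parallel to N (H ∥ N) on an open connected subset W₀ of Σ². Then on W₀ one has λ₁ = ⟨A_H E₁,E₁⟩ = 0, 4|H|² + c|T|² = 0 (hence c < 0), and the Gaussian curvature satisfies K = c(1−|T|²). -/

import Mathlib

/- STATEMENT 11.  Same abstract setting: a non-minimal, non-pseudo-umbilical
pmc helix surface `Σ²` in `M⁴(c) × ℝ` with `0 < |T| < 1`, `c ≠ 0`, such that
`H ∥ N` on an open connected subset `W₀ ⊆ Σ²` (parallelism at a point being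
expressed by the equality case `⟨H,N⟩² = |H|²|N|²` of Cauchy–Schwarz).
`Point` carries the topology of `Σ²`; `Dlocal` expresses that the derivative
`D X f` vanishes on any open set on which `f` is constant. -/
theorem H_parallel_N_consequences
    {Point : Type} [TopologicalSpace Point] {TV NV : Type}
    [AddCommGroup TV] [Module (Point → ℝ) TV]
    [AddCommGroup NV] [Module (Point → ℝ) NV]
    (c : ℝ) (hc : c ≠ 0)
    (g : TV → TV → Point → ℝ) (h : NV → NV → Point → ℝ)
    (D : TV → (Point → ℝ) → Point → ℝ)
    (nabla : TV → TV → TV) (nablaP : TV → NV → NV)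
    (sff : TV → TV → NV) (A : NV → TV → TV)
    (T : TV) (N H : NV) (K : Point → ℝ)
    -- locality of the derivative
    (Dlocal : ∀ (X : TV) (f : Point → ℝ) (U : Set Point), IsOpen U →
      (∃ r : ℝ, ∀ p ∈ U, f p = r) → ∀ p ∈ U, D X f p = 0)
    -- continuity of `⟨H,N⟩`
    (contHN : Continuous (h H N))
    -- `Σ²` is pmc and non-minimal, with `|H| = nH > 0`
    (pmc : ∀ X, nablaP X H = 0)
    (nH : ℝ) (nHpos : 0 < nH) (Hnorm : h H H = fun _ => nH ^ 2)
    -- `Σ²` is not pseudo-umbilical, `H` not umbilical on the set considered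
    (notPU : ¬ ∀ X, A H X = (h H H) • X)
    (notUmb : ¬ ∃ f : Point → ℝ, ∀ X, A H X = f • X)
    -- `Σ²` is a helix surface with `0 < |T| = t < 1`, so `|N|² = 1 − t²`
    (t : ℝ) (ht0 : 0 < t) (ht1 : t < 1)
    (helix : g T T = fun _ => t ^ 2)
    (Nnorm : h N N = fun _ => 1 - t ^ 2)
    -- the orthonormal frame `{E₁ = T/|T|, E₂}` diagonalizing `A_H`
    (E1 E2 : TV) (hE1 : T = (fun _ => t : Point → ℝ) • E1)
    (onE1 : g E1 E1 = 1) (onE2 : g E2 E2 = 1) (onE12 : g E1 E2 = 0)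
    -- the expression of the Gaussian curvature: `K = 2λ₁ − 4⟨H,N⟩²/|T|²`
    (Kformula : K = fun p => 2 * g (A H E1) E1 p - 4 * (h H N p) ^ 2 / t ^ 2)
    -- the derivatives of `λ₁` and of `⟨H,N⟩`
    (E1lam1 : D E1 (g (A H E1) E1)
        = fun p => (h H N p / t) * (4 * nH ^ 2 + c * t ^ 2 - 4 * g (A H E1) E1 p))
    (E1HN : D E1 (h H N) = fun p => -(t * g (A H E1) E1 p))
    -- the open connected set `W₀` on which `H ∥ N`
    (W0 : Set Point) (hW0open : IsOpen W0) (hW0conn : IsConnected W0)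
    (par : ∀ p ∈ W0, (h H N p) ^ 2 = h H H p * h N N p) :
    (∀ p ∈ W0, g (A H E1) E1 p = 0) ∧
      4 * nH ^ 2 + c * t ^ 2 = 0 ∧
      c < 0 ∧
      (∀ p ∈ W0, K p = c * (1 - t ^ 2)) := by
  have hs : ∀ p ∈ W0, (h H N p) ^ 2 = nH ^ 2 * (1 - t ^ 2) := by
    intro p hp
    have := par p hp
    rw [Hnorm, Nnorm] at this
    simpa using this
  have hspos : (0:ℝ) < nH ^ 2 * (1 - t ^ 2) :=
    mul_pos (pow_pos nHpos 2) (by nlinarith)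
  have hne : ∀ p ∈ W0, h H N p ≠ 0 := by
    intro p hp h0
    have := hs p hp; rw [h0] at this; nlinarith
  -- sign dichotomy via connectedness
  have hsq : ∀ p ∈ W0, h H N p = Real.sqrt (nH ^ 2 * (1 - t ^ 2)) ∨
      h H N p = -Real.sqrt (nH ^ 2 * (1 - t ^ 2)) := by
    intro p hp
    have := hs p hp
    have h2 : (h H N p) ^ 2 = (Real.sqrt (nH ^ 2 * (1 - t ^ 2))) ^ 2 := by
      rw [Real.sq_sqrt hspos.le]; exact this
    exact sq_eq_sq_iff_eq_or_eq_neg.mp h2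
  have hconst : ∃ r : ℝ, ∀ p ∈ W0, h H N p = r := by
    set u : Set Point := (h H N) ⁻¹' Set.Ioi 0
    set v : Set Point := (h H N) ⁻¹' Set.Iio 0
    have hu : IsOpen u := contHN.isOpen_preimage _ isOpen_Ioi
    have hv : IsOpen v := contHN.isOpen_preimage _ isOpen_Iio
    have hdisj : Disjoint u v := by
      rw [Set.disjoint_iff]
      rintro x ⟨hx1, hx2⟩
      exact absurd (lt_trans (Set.mem_preimage.mp hx2) (Set.mem_preimage.mp hx1)) (lt_irrefl _)
    have hsub : W0 ⊆ u ∪ v := by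
      intro p hp
      rcases lt_trichotomy (h H N p) 0 with hlt | heq | hgt
      · exact Or.inr hlt
      · exact absurd heq (hne p hp)
      · exact Or.inl hgt
    obtain ⟨p0, hp0⟩ := hW0conn.nonempty
    rcases hsub hp0 with hpu | hpv
    · have hW0u : W0 ⊆ u :=
        hW0conn.isPreconnected.subset_left_of_subset_union hu hv hdisj hsub ⟨p0, hp0, hpu⟩
      refine ⟨Real.sqrt (nH ^ 2 * (1 - t ^ 2)), fun p hp => ?_⟩
      rcases hsq p hp with h1 | h1
      · exact h1
      · exfalso
        have : (0:ℝ) < h H N p := hW0u hp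
        have hsq0 : 0 < Real.sqrt (nH ^ 2 * (1 - t ^ 2)) := Real.sqrt_pos.mpr hspos
        linarith [h1 ▸ this]
    · have hW0v : W0 ⊆ v :=
        hW0conn.isPreconnected.subset_right_of_subset_union hu hv hdisj hsub ⟨p0, hp0, hpv⟩
      refine ⟨-Real.sqrt (nH ^ 2 * (1 - t ^ 2)), fun p hp => ?_⟩
      rcases hsq p hp with h1 | h1
      · exfalso
        have : h H N p < 0 := hW0v hp
        have hsq0 : 0 < Real.sqrt (nH ^ 2 * (1 - t ^ 2)) := Real.sqrt_pos.mpr hspos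
        linarith [h1 ▸ this]
      · exact h1
  have hDHN : ∀ p ∈ W0, D E1 (h H N) p = 0 := Dlocal E1 (h H N) W0 hW0open hconst
  have hlam : ∀ p ∈ W0, g (A H E1) E1 p = 0 := by
    intro p hp
    have := hDHN p hp
    rw [E1HN] at this
    have ht : t ≠ 0 := ne_of_gt ht0
    field_simp at this
    rcases mul_eq_zero.mp (neg_eq_zero.mp this) with h1 | h1
    · exact absurd h1 ht
    · exact h1
  have hDlam : ∀ p ∈ W0, D E1 (g (A H E1) E1) p = 0 :=
    Dlocal E1 (g (A H E1) E1) W0 hW0open ⟨0, hlam⟩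
  obtain ⟨p0, hp0⟩ := hW0conn.nonempty
  have key : 4 * nH ^ 2 + c * t ^ 2 = 0 := by
    have := hDlam p0 hp0
    rw [E1lam1] at this
    simp only at this
    rw [hlam p0 hp0] at this
    have hne0 := hne p0 hp0
    have ht : t ≠ 0 := ne_of_gt ht0
    have : h H N p0 / t ≠ 0 := div_ne_zero hne0 ht
    rcases mul_eq_zero.mp (by linarith [hDlam p0 hp0] : (h H N p0 / t) * (4 * nH ^ 2 + c * t ^ 2 - 4 * 0) = 0) with h1 | h1
    · exact absurd h1 this
    · linarith
  refine ⟨hlam, key, by nlinarith, fun p hp => ?_⟩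
  rw [Kformula]
  simp only
  rw [hlam p hp, hs p hp]
  have ht : t ≠ 0 := ne_of_gt ht0
  field_simp
  nlinarith [key]
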